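/- Let ψ, φ be real numbers with φ < 1 < ψ, let A > 0, b > 0, and define H(z) = A·(((1 − φ)/(ψ − φ))(z/b)^{ψ} + ((ψ − 1)/(ψ − φ))(z/b)^{φ}) for z > 0. Then the equation H(z) = (z − 1)·H′(z) has exactly one solution z in the interval (max(1, b), ∞). -/

import Mathlib

open Real Filter

private lemma hasDerivAt_rpow_div (p b z : ℝ) (hb : 0 < b) (hz : 0 < z) :
    HasDerivAt (fun x : ℝ => (x / b) ^ p) (p * (z / b) ^ (p - 1) / b) z := by
  have h1 : HasDerivAt (fun x : ℝ => x / b) (1 / b) z := (hasDerivAt_id z).div_const b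
  have h2 : HasDerivAt (fun x : ℝ => x ^ p) (p * (z / b) ^ (p - 1)) (z / b) :=
    Real.hasDerivAt_rpow_const (Or.inl (div_pos hz hb).ne')
  have h3 := h2.comp z h1
  simpa [Function.comp_def, mul_one_div, div_eq_mul_inv] using h3

set_option maxHeartbeats 1000000 in
/-- For `φ < 1 < ψ`, `A > 0`, `b > 0` and
`H(z) = A·(((1 − φ)/(ψ − φ))(z/b)^ψ + ((ψ − 1)/(ψ − φ))(z/b)^φ)`, the equation
`H(z) = (z − 1)·H′(z)` has exactly one solution in `(max(1, b), ∞)`. -/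
theorem straddle_upper_boundary (ψ φ A b : ℝ)
    (hφ : φ < 1) (hψ : 1 < ψ) (hA : 0 < A) (hb : 0 < b)
    (H : ℝ → ℝ)
    (hH : H = fun z : ℝ => A * ((1 - φ) / (ψ - φ) * (z / b) ^ ψ +
      (ψ - 1) / (ψ - φ) * (z / b) ^ φ)) :
    ∃! z : ℝ, z ∈ Set.Ioi (max 1 b) ∧ H z = (z - 1) * deriv H z := by
  subst hH
  have hψφ : (0:ℝ) < ψ - φ := by linarith
  set c₁ := (1 - φ) / (ψ - φ) with hc₁def
  set c₂ := (ψ - 1) / (ψ - φ) with hc₂def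
  have hc₁ : 0 < c₁ := div_pos (by linarith) hψφ
  have hc₂ : 0 < c₂ := div_pos (by linarith) hψφ
  set m := max 1 b with hmdef
  have hm1 : (1:ℝ) ≤ m := le_max_left _ _
  have hmb : b ≤ m := le_max_right _ _
  have hm0 : (0:ℝ) < m := lt_of_lt_of_le one_pos hm1
  set Hf : ℝ → ℝ := fun z => A * (c₁ * (z / b) ^ ψ + c₂ * (z / b) ^ φ) with hHf
  set D : ℝ → ℝ := fun z =>
    A * (c₁ * (ψ * (z / b) ^ (ψ - 1) / b) + c₂ * (φ * (z / b) ^ (φ - 1) / b)) with hDdef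
  set D' : ℝ → ℝ := fun z =>
    A * (c₁ * (ψ * ((ψ - 1) * (z / b) ^ (ψ - 1 - 1) / b) / b) +
         c₂ * (φ * ((φ - 1) * (z / b) ^ (φ - 1 - 1) / b) / b)) with hD'def
  have hHderiv : ∀ z : ℝ, 0 < z → HasDerivAt Hf (D z) z := by
    intro z hz
    exact (((hasDerivAt_rpow_div ψ b z hb hz).const_mul c₁).add
      ((hasDerivAt_rpow_div φ b z hb hz).const_mul c₂)).const_mul A
  have hDderiv : ∀ z : ℝ, 0 < z → HasDerivAt D (D' z) z := by
    intro z hz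
    exact (((((hasDerivAt_rpow_div (ψ - 1) b z hb hz).const_mul ψ).div_const b).const_mul c₁).add
      ((((hasDerivAt_rpow_div (φ - 1) b z hb hz).const_mul φ).div_const b).const_mul c₂)).const_mul A
  clear_value c₁ c₂ m Hf D D'
  set k : ℝ → ℝ := fun z => Hf z - (z - 1) * D z with hkdef
  have hkderiv : ∀ z : ℝ, 0 < z → HasDerivAt k (-((z - 1) * D' z)) z := by
    intro z hz
    have h : HasDerivAt (fun y => Hf y - (id y - 1) * D y) (D z - (1 * D z + (z - 1) * D' z)) z :=
      (hHderiv z hz).sub (((hasDerivAt_id z).sub_const 1).mul (hDderiv z hz))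
    simp only [id_eq] at h
    convert h using 1
    ring
  have hkcont : ContinuousOn k (Set.Ici m) := fun z hz =>
    ((hkderiv z (lt_of_lt_of_le hm0 hz)).continuousAt).continuousWithinAt
  -- strict antitonicity on [m, ∞)
  have hanti : StrictAntiOn k (Set.Ici m) := by
    apply strictAntiOn_of_deriv_neg (convex_Ici m) hkcont
    intro x hx
    rw [interior_Ici] at hx
    have hx1 : 1 < x := lt_of_le_of_lt hm1 hx
    have hx0 : 0 < x := by linarith
    rw [(hkderiv x hx0).deriv]
    have hub : 1 < x / b := (one_lt_div hb).mpr (lt_of_le_of_lt hmb hx)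
    have hP : (0:ℝ) < (x / b) ^ (ψ - 1 - 1) := Real.rpow_pos_of_pos (by linarith) _
    have hQ : (0:ℝ) < (x / b) ^ (φ - 1 - 1) := Real.rpow_pos_of_pos (by linarith) _
    have hPQ : (x / b) ^ (φ - 1 - 1) < (x / b) ^ (ψ - 1 - 1) :=
      (Real.rpow_lt_rpow_left_iff hub).mpr (by linarith)
    set P := (x / b) ^ (ψ - 1 - 1)
    set Q := (x / b) ^ (φ - 1 - 1)
    have hmain : 0 < ψ * P - φ * Q := by
      rcases le_or_gt φ 0 with h0 | h0
      · nlinarith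
      · nlinarith
    have hD'pos : 0 < D' x := by
      rw [hD'def]
      have e : c₁ * (ψ * ((ψ - 1) * P / b) / b) + c₂ * (φ * ((φ - 1) * Q / b) / b)
          = (ψ - 1) * (1 - φ) * (ψ * P - φ * Q) / ((ψ - φ) * b * b) := by
        rw [hc₁def, hc₂def]
        field_simp
        ring
      show 0 < A * (c₁ * (ψ * ((ψ - 1) * P / b) / b) + c₂ * (φ * ((φ - 1) * Q / b) / b))
      have : 0 < (ψ - 1) * (1 - φ) * (ψ * P - φ * Q) / ((ψ - φ) * b * b) := by
        apply div_pos
        · apply mul_pos (mul_pos (by linarith) (by linarith)) hmain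
        · positivity
      nlinarith
    nlinarith
  -- k m > 0
  have hkm : 0 < k m := by
    rcases le_or_gt b 1 with hble | hbgt
    · have hmeq : m = 1 := hmdef.trans (max_eq_left hble)
      rw [hmeq]
      show 0 < Hf 1 - ((1:ℝ) - 1) * D 1
      have : Hf 1 - ((1:ℝ) - 1) * D 1 = Hf 1 := by ring
      rw [this, hHf]
      have h1 : (0:ℝ) < (1 / b) ^ ψ := Real.rpow_pos_of_pos (by positivity) _
      have h2 : (0:ℝ) < (1 / b) ^ φ := Real.rpow_pos_of_pos (by positivity) _
      exact mul_pos hA (add_pos (mul_pos hc₁ h1) (mul_pos hc₂ h2))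
    · have hmeq : m = b := hmdef.trans (max_eq_right hbgt.le)
      rw [hmeq]
      have hbb : b / b = 1 := div_self hb.ne'
      have h1 : c₁ + c₂ = 1 := by
        rw [hc₁def, hc₂def, ← add_div, div_eq_one_iff_eq hψφ.ne']
        ring
      have h2 : c₁ * ψ + c₂ * φ = 1 := by
        rw [hc₁def, hc₂def]
        field_simp
        ring
      have e : k b = A - (b - 1) * (A / b) := by
        show Hf b - (b - 1) * D b = A - (b - 1) * (A / b)
        rw [hHf, hDdef]
        simp only [hbb, Real.one_rpow]
        have e2 : c₁ * (ψ * 1 / b) + c₂ * (φ * 1 / b) = 1 / b := by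
          field_simp
          linarith [h2]
        rw [e2]
        have e3 : c₁ * 1 + c₂ * 1 = 1 := by rw [mul_one, mul_one, h1]
        rw [e3]
        ring
      rw [e]
      have : A - (b - 1) * (A / b) = A / b := by
        field_simp
        ring
      rw [this]
      positivity
  -- k tends to -∞
  have htb : Tendsto (fun z : ℝ => z / b) atTop atTop := tendsto_id.atTop_div_const hb
  have tX : Tendsto (fun z : ℝ => (z / b) ^ ψ) atTop atTop :=
    (tendsto_rpow_atTop (by linarith : (0:ℝ) < ψ)).comp htb
  have tE : Tendsto (fun z : ℝ => (z / b) ^ (φ - ψ)) atTop (nhds 0) := by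
    have h := (tendsto_rpow_neg_atTop (show (0:ℝ) < ψ - φ by linarith)).comp htb
    simpa [Function.comp_def, neg_sub] using h
  have tR : Tendsto (fun z : ℝ => (z - 1) / z) atTop (nhds 1) := by
    have h1 : Tendsto (fun z : ℝ => 1 - z⁻¹) atTop (nhds 1) := by
      have := (tendsto_inv_atTop_zero (𝕜 := ℝ)).const_sub 1
      simpa using this
    apply h1.congr'
    filter_upwards [eventually_gt_atTop (0:ℝ)] with z hz
    field_simp
  set br : ℝ → ℝ := fun z =>
    c₁ * (1 - ψ * ((z - 1) / z)) + c₂ * ((z / b) ^ (φ - ψ) * (1 - φ * ((z - 1) / z))) with hbr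
  have tBr : Tendsto br atTop
      (nhds (c₁ * (1 - ψ * 1) + c₂ * (0 * (1 - φ * 1)))) := by
    apply Tendsto.add
    · exact ((tendsto_const_nhds.sub (tR.const_mul ψ)).const_mul c₁)
    · exact ((tE.mul (tendsto_const_nhds.sub (tR.const_mul φ))).const_mul c₂)
  have hlim_neg : c₁ * (1 - ψ * 1) + c₂ * (0 * (1 - φ * 1)) < 0 := by
    have : c₁ * (1 - ψ) < 0 := mul_neg_of_pos_of_neg hc₁ (by linarith)
    nlinarith
  have tG : Tendsto (fun z : ℝ => (z / b) ^ ψ * br z) atTop atBot :=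
    tX.atTop_mul_neg hlim_neg tBr
  have tG2 : Tendsto (fun z : ℝ => A * ((z / b) ^ ψ * br z)) atTop atBot :=
    (tendsto_const_mul_atBot_of_pos hA).mpr tG
  have htendk : Tendsto k atTop atBot := by
    apply tG2.congr'
    filter_upwards [eventually_gt_atTop (0:ℝ)] with z hz
    have hu : 0 < z / b := div_pos hz hb
    have e1 : (z / b) ^ (ψ - 1) = (z / b) ^ ψ / (z / b) := by
      rw [Real.rpow_sub hu, Real.rpow_one]
    have e2 : (z / b) ^ (φ - 1) = (z / b) ^ φ / (z / b) := by
      rw [Real.rpow_sub hu, Real.rpow_one]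
    have e3 : (z / b) ^ (φ - ψ) = (z / b) ^ φ / (z / b) ^ ψ := Real.rpow_sub hu φ ψ
    show A * ((z / b) ^ ψ * br z) = Hf z - (z - 1) * D z
    simp only [hbr, hHf, hDdef]
    rw [e1, e2, e3]
    have hX : (0:ℝ) < (z / b) ^ ψ := Real.rpow_pos_of_pos hu _
    field_simp
    ring
  -- find a point where k is negative
  obtain ⟨Z, hZm, hZneg⟩ : ∃ Z : ℝ, m < Z ∧ k Z < 0 := by
    have h := (eventually_gt_atTop m).and (htendk.eventually (eventually_lt_atBot 0))
    obtain ⟨Z, h1, h2⟩ := h.exists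
    exact ⟨Z, h1, h2⟩
  -- IVT
  have hivt := intermediate_value_Ioo' hZm.le (hkcont.mono Set.Icc_subset_Ici_self)
  obtain ⟨z, hzmem, hz0⟩ := hivt (Set.mem_Ioo.mpr ⟨hZneg, hkm⟩)
  have hzm : m < z := hzmem.1
  have hz0' : (0:ℝ) < z := lt_trans hm0 hzm
  refine ⟨z, ⟨hzm, ?_⟩, ?_⟩
  · have hd : deriv Hf z = D z := (hHderiv z hz0').deriv
    show Hf z = (z - 1) * deriv Hf z
    rw [hd]
    have hz0'' : Hf z - (z - 1) * D z = 0 := hz0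
    linarith
  · rintro y ⟨hy, hyeq⟩
    have hy' : m < y := hy
    have hy0 : (0:ℝ) < y := lt_trans hm0 hy'
    have hky : k y = 0 := by
      have hd : deriv Hf y = D y := (hHderiv y hy0).deriv
      show Hf y - (y - 1) * D y = 0
      have : Hf y = (y - 1) * deriv Hf y := hyeq
      rw [hd] at this
      linarith
    exact hanti.injOn (Set.mem_Ici.mpr hy'.le) (Set.mem_Ici.mpr hzm.le) (hky.trans hz0.symm)
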